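/- arXiv:2502.05516 — 9 statements merged into one kernel-verified Lean document; each statement's English description precedes it below -/
import Mathlib

section
/- The Laplace mechanism releasing Y = f(x) + Lap(0, Δ₁(f)/ε) satisfies ε-differential privacy: for any two neighboring databases x₁ ∼ x₂ and any measurable E ⊆ ℝ, the density ratio of the output distributions is bounded by e^ε, i.e., P_{Y|X=x₁}(E) ≤ e^ε · P_{Y|X=x₂}(E). -/
open Real MeasureTheory Set

lemma integrable_exp_neg_mul_abs_aux {a : ℝ} (ha : 0 < a) :
    Integrable (fun y : ℝ => Real.exp (-a * |y|)) := by
  have hIoi : IntegrableOn (fun y : ℝ => Real.exp (-a * |y|)) (Ioi 0) := by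
    refine (exp_neg_integrableOn_Ioi 0 ha).congr_fun (fun y hy => ?_) measurableSet_Ioi
    rw [abs_of_pos (by exact hy)]
  have hIic : IntegrableOn (fun y : ℝ => Real.exp (-a * |y|)) (Iic 0) := by
    rw [← Measure.map_neg_eq_self (volume : Measure ℝ)]
    have m : MeasurableEmbedding fun x : ℝ => -x := (Homeomorph.neg ℝ).measurableEmbedding
    rw [m.integrableOn_map_iff]
    simp_rw [Function.comp_def, abs_neg, neg_preimage, neg_Iic, neg_zero]
    exact Iff.mpr integrableOn_Ici_iff_integrableOn_Ioi hIoi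
  have := hIic.union hIoi
  rwa [Iic_union_Ioi, integrableOn_univ] at this

lemma integrable_exp_neg_mul_abs_sub (a c : ℝ) (ha : 0 < a) :
    Integrable (fun y : ℝ => Real.exp (-a * |y - c|)) :=
  (integrable_exp_neg_mul_abs_aux ha).comp_sub_right c

/-- The Laplace mechanism with scale `b = Δ/ε` satisfies `ε`-DP: for neighboring
databases `x₁ ∼ x₂` and every measurable `E ⊆ ℝ`,
`P_{Y|X=x₁}(E) ≤ e^ε · P_{Y|X=x₂}(E)`. -/
theorem laplace_mechanism_dp {n : ℕ} {D : Type*} [Fintype D]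
    (f : (Fin n → D) → ℝ) (Δ ε : ℝ) (hε : 0 < ε) (hΔ : 0 < Δ)
    (hsens : ∀ x₁ x₂ : Fin n → D,
      (∃ i, (∀ j, j ≠ i → x₁ j = x₂ j) ∧ x₁ i ≠ x₂ i) → |f x₁ - f x₂| ≤ Δ)
    (x₁ x₂ : Fin n → D)
    (hnbr : ∃ i, (∀ j, j ≠ i → x₁ j = x₂ j) ∧ x₁ i ≠ x₂ i)
    (E : Set ℝ) (hE : MeasurableSet E) :
    ∫ y in E, (1 / (2 * (Δ / ε))) * Real.exp (-|y - f x₁| / (Δ / ε)) ≤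
      Real.exp ε * ∫ y in E, (1 / (2 * (Δ / ε))) * Real.exp (-|y - f x₂| / (Δ / ε)) := by
  have hb : 0 < Δ / ε := div_pos hΔ hε
  have ha : 0 < (Δ / ε)⁻¹ := inv_pos.mpr hb
  have key : ∀ y : ℝ, -|y - f x₁| / (Δ / ε) ≤ ε + -|y - f x₂| / (Δ / ε) := by
    intro y
    have h1 : |y - f x₂| - |y - f x₁| ≤ |f x₁ - f x₂| := by
      have := abs_sub_abs_le_abs_sub (y - f x₂) (y - f x₁)
      have heq : (y - f x₂) - (y - f x₁) = f x₁ - f x₂ := by ring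
      rwa [heq] at this
    have h2 : |y - f x₂| - |y - f x₁| ≤ Δ := h1.trans (hsens x₁ x₂ hnbr)
    have h3 : (|y - f x₂| - |y - f x₁|) / (Δ / ε) ≤ ε := by
      rw [div_le_iff₀ hb]
      have : ε * (Δ / ε) = Δ := by field_simp
      rw [this]; exact h2
    rw [sub_div] at h3
    have e1 : -|y - f x₁| / (Δ / ε) = -(|y - f x₁| / (Δ / ε)) := neg_div _ _
    have e2 : -|y - f x₂| / (Δ / ε) = -(|y - f x₂| / (Δ / ε)) := neg_div _ _
    linarith
  have hptw : ∀ y ∈ E, (1 / (2 * (Δ / ε))) * Real.exp (-|y - f x₁| / (Δ / ε)) ≤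
      Real.exp ε * ((1 / (2 * (Δ / ε))) * Real.exp (-|y - f x₂| / (Δ / ε))) := by
    intro y _
    have hexp : Real.exp (-|y - f x₁| / (Δ / ε)) ≤
        Real.exp ε * Real.exp (-|y - f x₂| / (Δ / ε)) := by
      rw [← Real.exp_add]
      exact Real.exp_le_exp.mpr (key y)
    have hc : 0 < 1 / (2 * (Δ / ε)) := by positivity
    calc (1 / (2 * (Δ / ε))) * Real.exp (-|y - f x₁| / (Δ / ε))
        ≤ (1 / (2 * (Δ / ε))) * (Real.exp ε * Real.exp (-|y - f x₂| / (Δ / ε))) :=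
          mul_le_mul_of_nonneg_left hexp hc.le
      _ = Real.exp ε * ((1 / (2 * (Δ / ε))) * Real.exp (-|y - f x₂| / (Δ / ε))) := by ring
  have hint : ∀ c : ℝ, Integrable (fun y : ℝ => (1 / (2 * (Δ / ε))) *
      Real.exp (-|y - c| / (Δ / ε))) := by
    intro c
    have := (integrable_exp_neg_mul_abs_sub (Δ / ε)⁻¹ c ha).const_mul (1 / (2 * (Δ / ε)))
    refine this.congr (Filter.Eventually.of_forall fun y => ?_)
    simp only [neg_mul, neg_div, div_eq_inv_mul, mul_neg]
  have h1 : IntegrableOn (fun y : ℝ => (1 / (2 * (Δ / ε))) *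
      Real.exp (-|y - f x₁| / (Δ / ε))) E := (hint (f x₁)).integrableOn
  have h2 : IntegrableOn (fun y : ℝ => Real.exp ε * ((1 / (2 * (Δ / ε))) *
      Real.exp (-|y - f x₂| / (Δ / ε)))) E :=
    ((hint (f x₂)).const_mul (Real.exp ε)).integrableOn
  calc ∫ y in E, (1 / (2 * (Δ / ε))) * Real.exp (-|y - f x₁| / (Δ / ε))
      ≤ ∫ y in E, Real.exp ε * ((1 / (2 * (Δ / ε))) * Real.exp (-|y - f x₂| / (Δ / ε))) :=
        setIntegral_mono_on h1 h2 hE hptw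
    _ = Real.exp ε * ∫ y in E, (1 / (2 * (Δ / ε))) * Real.exp (-|y - f x₂| / (Δ / ε)) :=
        integral_const_mul _ _
end

section
/- If a mechanism P_{Y|X} on 𝒳 = 𝒟ⁿ satisfies ε-differential privacy, then for every product distribution P_X = ∏ᵢ P_{D_i} with full support, every index i ∈ [n], and every output y with positive density, the pointwise maximal leakage of the i-th entry satisfies ℓ(D_i → y) ≤ ε. -/
open Finset Real

/-- If a mechanism `Q` on `𝒳 = Dⁿ` satisfies `ε`-DP, then for every full-support
product prior `p = ∏ᵢ pᵢ`, every index `i`, and every output `y` with positive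
probability, the PML of the `i`-th entry satisfies `ℓ(Dᵢ → y) ≤ ε`. -/
theorem dp_implies_pml_of_entry {n : ℕ} {D Y : Type*} [Fintype D] [Nonempty D]
    [DecidableEq D] [Fintype Y]
    (Q : (Fin n → D) → Y → ℝ) (hQ : ∀ x y, 0 ≤ Q x y) (hQs : ∀ x, ∑ y, Q x y = 1)
    (ε : ℝ) (hε : 0 ≤ ε)
    (hDP : ∀ x x' : Fin n → D, (∃ i, ∀ j, j ≠ i → x j = x' j) →
      ∀ y, Q x y ≤ Real.exp ε * Q x' y)
    (p : Fin n → D → ℝ) (hp : ∀ i d, 0 < p i d) (hps : ∀ i, ∑ d, p i d = 1)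
    (i : Fin n) (y : Y)
    (PY : ℝ) (hPY : PY = ∑ x : Fin n → D, Q x y * ∏ j, p j (x j)) (hPYpos : 0 < PY)
    (Pcond : D → ℝ)
    (hPcond : ∀ d, Pcond d =
      ∑ x ∈ Finset.univ.filter (fun x : Fin n → D => x i = d),
        Q x y * ∏ j ∈ Finset.univ.erase i, p j (x j)) :
    Real.log (Finset.univ.sup' Finset.univ_nonempty (fun d => Pcond d / PY)) ≤ ε := by
  have hPcnn : ∀ d, 0 ≤ Pcond d := by
    intro d; rw [hPcond]
    exact Finset.sum_nonneg fun x _ =>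
      mul_nonneg (hQ x y) (Finset.prod_nonneg fun j _ => (hp j (x j)).le)
  -- DP transfer between fibers
  have key : ∀ d d', Pcond d ≤ Real.exp ε * Pcond d' := by
    intro d d'
    rw [hPcond, hPcond, Finset.mul_sum]
    calc ∑ x ∈ Finset.univ.filter (fun x : Fin n → D => x i = d),
            Q x y * ∏ j ∈ Finset.univ.erase i, p j (x j)
        ≤ ∑ x ∈ Finset.univ.filter (fun x : Fin n → D => x i = d),
            (Real.exp ε * Q (Function.update x i d') y) *
              ∏ j ∈ Finset.univ.erase i, p j (x j) := by
          refine Finset.sum_le_sum fun x _ => ?_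
          refine mul_le_mul_of_nonneg_right ?_
            (Finset.prod_nonneg fun j _ => (hp j (x j)).le)
          exact hDP x (Function.update x i d')
            ⟨i, fun j hj => (Function.update_of_ne hj _ _).symm⟩ y
      _ = ∑ x ∈ Finset.univ.filter (fun x : Fin n → D => x i = d'),
            Real.exp ε * (Q x y * ∏ j ∈ Finset.univ.erase i, p j (x j)) := by
          refine Finset.sum_nbij' (fun x => Function.update x i d')
            (fun x => Function.update x i d) ?_ ?_ ?_ ?_ ?_
          · intro x hx
            simp [Finset.mem_filter]
          · intro x hx
            simp [Finset.mem_filter]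
          · intro x hx
            simp only [Finset.mem_filter, Finset.mem_univ, true_and] at hx
            funext j
            by_cases hj : j = i
            · subst hj; simp [hx]
            · simp [Function.update_of_ne hj]
          · intro x hx
            simp only [Finset.mem_filter, Finset.mem_univ, true_and] at hx
            funext j
            by_cases hj : j = i
            · subst hj; simp [hx]
            · simp [Function.update_of_ne hj]
          · intro x hx
            rw [mul_assoc]
            congr 1
            refine congrArg _ ?_
            refine Finset.prod_congr rfl fun j hj => ?_
            simp [Function.update_of_ne (Finset.ne_of_mem_erase hj)]
  -- decompose PY over fibers
  have hPY2 : PY = ∑ d, p i d * Pcond d := by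
    rw [hPY, ← Finset.sum_fiberwise (g := fun x : Fin n → D => x i)
      (f := fun x => Q x y * ∏ j, p j (x j))]
    refine Finset.sum_congr rfl fun d _ => ?_
    rw [hPcond, Finset.mul_sum]
    refine Finset.sum_congr rfl fun x hx => ?_
    simp only [Finset.mem_filter, Finset.mem_univ, true_and] at hx
    rw [← Finset.mul_prod_erase Finset.univ _ (Finset.mem_univ i), hx]
    ring
  have hle : ∀ d, Pcond d ≤ Real.exp ε * PY := by
    intro d
    have : Pcond d = ∑ d', p i d' * Pcond d := by
      rw [← Finset.sum_mul, hps i, one_mul]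
    rw [this, hPY2, Finset.mul_sum]
    refine Finset.sum_le_sum fun d' _ => ?_
    rw [show Real.exp ε * (p i d' * Pcond d') = p i d' * (Real.exp ε * Pcond d') by ring]
    exact mul_le_mul_of_nonneg_left (key d d') (hp i d').le
  have hsup : (Finset.univ.sup' Finset.univ_nonempty (fun d => Pcond d / PY)) ≤ Real.exp ε := by
    refine Finset.sup'_le _ _ fun d _ => ?_
    rw [div_le_iff₀ hPYpos]
    exact hle d
  have hsupnn : 0 ≤ Finset.univ.sup' Finset.univ_nonempty (fun d => Pcond d / PY) := by
    obtain ⟨d⟩ := ‹Nonempty D›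
    exact le_trans (div_nonneg (hPcnn d) hPYpos.le)
      (Finset.le_sup' (fun d => Pcond d / PY) (Finset.mem_univ d))
  rcases hsupnn.eq_or_lt with h | h
  · rw [← h, Real.log_zero]; exact hε
  · exact (Real.log_le_iff_le_exp h).mpr hsup
end

section
/- Conversely, if for all product distributions P_X ∈ 𝒬_𝒳 (full support), all indices i ∈ [n], and all outputs y the pointwise maximal leakage satisfies ℓ(D_i → y) ≤ ε, then the mechanism P_{Y|X} satisfies ε-differential privacy. -/
open Finset Real

/-- Converse: if for all full-support product priors, all indices `i`, and all
outputs `y` with positive probability the PML of the `i`-th entry is at most `ε`,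
then the mechanism satisfies `ε`-DP. -/
theorem pml_of_entries_implies_dp {n : ℕ} {D Y : Type*} [Fintype D] [Nonempty D]
    [DecidableEq D] [Fintype Y]
    (Q : (Fin n → D) → Y → ℝ) (hQ : ∀ x y, 0 ≤ Q x y) (hQs : ∀ x, ∑ y, Q x y = 1)
    (ε : ℝ) (hε : 0 ≤ ε)
    (hPML : ∀ p : Fin n → D → ℝ, (∀ i d, 0 < p i d) → (∀ i, ∑ d, p i d = 1) →
      ∀ i : Fin n, ∀ y : Y,
        0 < (∑ x : Fin n → D, Q x y * ∏ j, p j (x j)) →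
        Real.log (Finset.univ.sup' Finset.univ_nonempty (fun d : D =>
          (∑ x ∈ Finset.univ.filter (fun x : Fin n → D => x i = d),
            Q x y * ∏ j ∈ Finset.univ.erase i, p j (x j)) /
          (∑ x : Fin n → D, Q x y * ∏ j, p j (x j)))) ≤ ε) :
    ∀ x x' : Fin n → D, (∃ i, ∀ j, j ≠ i → x j = x' j) →
      ∀ y, Q x y ≤ Real.exp ε * Q x' y := by
  intro x x' hnbr y
  obtain ⟨i, hxi⟩ := hnbr
  rcases (hQ x y).eq_or_lt with hQxy | hQxy
  · calc Q x y = 0 := hQxy.symm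
      _ ≤ Real.exp ε * Q x' y := mul_nonneg (Real.exp_nonneg ε) (hQ x' y)
  set c : ℕ := Fintype.card D with hc
  have hcpos : (0:ℝ) < c := by
    exact_mod_cast Fintype.card_pos
  set S : ℝ := ∑ x'' : Fin n → D, Q x'' y with hS
  have key : ∀ δ ∈ Set.Ioo (0:ℝ) 1,
      Q x y * (1-δ)^(n-1) ≤ Real.exp ε * (Q x' y + δ * S) := by
    intro δ hδ
    obtain ⟨hδ0, hδ1⟩ := hδ
    have h1δ : (0:ℝ) ≤ 1 - δ := by linarith
    set p : Fin n → D → ℝ := fun j d => δ / c + if d = x' j then 1 - δ else 0 with hp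
    have hp_pos : ∀ j d, 0 < p j d := by
      intro j d
      have : (0:ℝ) < δ / c := div_pos hδ0 hcpos
      simp only [hp]
      split <;> linarith
    have hp_le_one : ∀ j d, p j d ≤ 1 := by
      intro j d
      have hdc : δ / c ≤ δ := by
        apply div_le_self hδ0.le
        exact_mod_cast Fintype.card_pos
      simp only [hp]
      split <;> linarith
    have hp_sum : ∀ j, ∑ d, p j d = 1 := by
      intro j
      simp only [hp]
      rw [Finset.sum_add_distrib, Finset.sum_const, Finset.sum_ite_eq' Finset.univ (x' j)]
      simp only [Finset.mem_univ, if_true, Finset.card_univ, ← hc, nsmul_eq_mul]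
      field_simp
      ring
    set Z : ℝ := ∑ x'' : Fin n → D, Q x'' y * ∏ j, p j (x'' j) with hZ
    have hterm_nonneg : ∀ x'' : Fin n → D, 0 ≤ Q x'' y * ∏ j, p j (x'' j) := by
      intro x''
      exact mul_nonneg (hQ _ _) (Finset.prod_nonneg fun j _ => (hp_pos j _).le)
    have hZpos : 0 < Z := by
      apply Finset.sum_pos' (fun x'' _ => hterm_nonneg x'')
      exact ⟨x, Finset.mem_univ x,
        mul_pos hQxy (Finset.prod_pos fun j _ => hp_pos j _)⟩
    have hlog := hPML p hp_pos hp_sum i y hZpos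
    rw [← hZ] at hlog
    set num : ℝ := ∑ x'' ∈ Finset.univ.filter (fun x'' : Fin n → D => x'' i = x i),
        Q x'' y * ∏ j ∈ Finset.univ.erase i, p j (x'' j) with hnum
    have hterm2_nonneg : ∀ x'' : Fin n → D,
        0 ≤ Q x'' y * ∏ j ∈ Finset.univ.erase i, p j (x'' j) := by
      intro x''
      exact mul_nonneg (hQ _ _) (Finset.prod_nonneg fun j _ => (hp_pos j _).le)
    have hx_lb : Q x y * (1-δ)^(n-1) ≤ Q x y * ∏ j ∈ Finset.univ.erase i, p j (x j) := by
      apply mul_le_mul_of_nonneg_left _ hQxy.le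
      have hcard : (Finset.univ.erase i).card = n - 1 := by
        rw [Finset.card_erase_of_mem (Finset.mem_univ i), Finset.card_univ, Fintype.card_fin]
      calc (1-δ)^(n-1) = ∏ _j ∈ Finset.univ.erase i, (1-δ) := by
            rw [Finset.prod_const, hcard]
        _ ≤ ∏ j ∈ Finset.univ.erase i, p j (x j) := by
            apply Finset.prod_le_prod (fun _ _ => h1δ)
            intro j hj
            have hji : j ≠ i := Finset.ne_of_mem_erase hj
            have : x j = x' j := hxi j hji
            have hdc : (0:ℝ) ≤ δ / c := le_of_lt (div_pos hδ0 hcpos)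
            simp only [hp, this, if_pos rfl, if_true, eq_self_iff_true]
            linarith
    have hnum_lb : Q x y * ∏ j ∈ Finset.univ.erase i, p j (x j) ≤ num := by
      apply Finset.single_le_sum (fun x'' _ => hterm2_nonneg x'')
      simp
    have hnum_pos : 0 < num := lt_of_lt_of_le
      (lt_of_lt_of_le (mul_pos hQxy (pow_pos (by linarith) _)) hx_lb) hnum_lb
    -- the ratio at d = x i
    have hratio_le : num / Z ≤ Finset.univ.sup' Finset.univ_nonempty (fun d : D =>
        (∑ x'' ∈ Finset.univ.filter (fun x'' : Fin n → D => x'' i = d),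
          Q x'' y * ∏ j ∈ Finset.univ.erase i, p j (x'' j)) / Z) :=
      Finset.le_sup' (f := fun d : D =>
        (∑ x'' ∈ Finset.univ.filter (fun x'' : Fin n → D => x'' i = d),
          Q x'' y * ∏ j ∈ Finset.univ.erase i, p j (x'' j)) / Z) (Finset.mem_univ (x i))
    have hsup_pos : 0 < Finset.univ.sup' Finset.univ_nonempty (fun d : D =>
        (∑ x'' ∈ Finset.univ.filter (fun x'' : Fin n → D => x'' i = d),
          Q x'' y * ∏ j ∈ Finset.univ.erase i, p j (x'' j)) / Z) :=
      lt_of_lt_of_le (div_pos hnum_pos hZpos) hratio_le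
    have hsup_le : Finset.univ.sup' Finset.univ_nonempty (fun d : D =>
        (∑ x'' ∈ Finset.univ.filter (fun x'' : Fin n → D => x'' i = d),
          Q x'' y * ∏ j ∈ Finset.univ.erase i, p j (x'' j)) / Z) ≤ Real.exp ε :=
      (Real.log_le_iff_le_exp hsup_pos).mp hlog
    have hnum_le : num ≤ Real.exp ε * Z := by
      have := le_trans hratio_le hsup_le
      rwa [div_le_iff₀ hZpos] at this
    -- upper bound on Z
    have hZ_ub : Z ≤ Q x' y + δ * S := by
      have hsplit : Q x' y * ∏ j, p j (x' j) +
          ∑ x'' ∈ Finset.univ.erase x', Q x'' y * ∏ j, p j (x'' j) = Z := by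
        rw [hZ]
        exact Finset.add_sum_erase _ (fun x'' => Q x'' y * ∏ j, p j (x'' j)) (Finset.mem_univ x')
      have h1 : Q x' y * ∏ j, p j (x' j) ≤ Q x' y := by
        have : ∏ j, p j (x' j) ≤ 1 :=
          Finset.prod_le_one (fun j _ => (hp_pos j _).le) (fun j _ => hp_le_one j _)
        calc Q x' y * ∏ j, p j (x' j) ≤ Q x' y * 1 :=
              mul_le_mul_of_nonneg_left this (hQ _ _)
          _ = Q x' y := mul_one _
      have h2 : ∑ x'' ∈ Finset.univ.erase x', Q x'' y * ∏ j, p j (x'' j) ≤ δ * S := by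
        have hbd : ∀ x'' ∈ Finset.univ.erase x',
            Q x'' y * ∏ j, p j (x'' j) ≤ δ * Q x'' y := by
          intro x'' hx''
          have hne : x'' ≠ x' := Finset.ne_of_mem_erase hx''
          obtain ⟨j0, hj0⟩ := Function.ne_iff.mp hne
          have hprod : ∏ j, p j (x'' j) ≤ δ := by
            calc ∏ j, p j (x'' j) ≤ ∏ j, (if j = j0 then δ else 1) := by
                  apply Finset.prod_le_prod (fun j _ => (hp_pos j _).le)
                  intro j _
                  by_cases hjj : j = j0
                  · subst hjj
                    simp only [if_pos rfl, hp, if_neg hj0, add_zero]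
                    apply div_le_self hδ0.le
                    exact_mod_cast Fintype.card_pos
                  · rw [if_neg hjj]; exact hp_le_one j _
              _ = δ := by
                  rw [Finset.prod_ite_eq' Finset.univ j0 (fun _ => δ)]
                  simp
          calc Q x'' y * ∏ j, p j (x'' j) ≤ Q x'' y * δ :=
               mul_le_mul_of_nonneg_left hprod (hQ _ _)
            _ = δ * Q x'' y := mul_comm _ _
        calc ∑ x'' ∈ Finset.univ.erase x', Q x'' y * ∏ j, p j (x'' j)
            ≤ ∑ x'' ∈ Finset.univ.erase x', δ * Q x'' y := Finset.sum_le_sum hbd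
          _ ≤ ∑ x'' : Fin n → D, δ * Q x'' y := by
              apply Finset.sum_le_sum_of_subset_of_nonneg (Finset.subset_univ _)
              intro x'' _ _
              exact mul_nonneg hδ0.le (hQ _ _)
          _ = δ * S := by rw [hS, Finset.mul_sum]
      linarith
    calc Q x y * (1-δ)^(n-1) ≤ num := le_trans hx_lb hnum_lb
      _ ≤ Real.exp ε * Z := hnum_le
      _ ≤ Real.exp ε * (Q x' y + δ * S) :=
          mul_le_mul_of_nonneg_left hZ_ub (Real.exp_nonneg ε)
  -- take the limit δ → 0⁺
  have h1 : Filter.Tendsto (fun δ : ℝ => Q x y * (1-δ)^(n-1)) (nhdsWithin 0 (Set.Ioi 0))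
      (nhds (Q x y)) := by
    have hcont : Continuous fun δ : ℝ => Q x y * (1-δ)^(n-1) :=
      continuous_const.mul ((continuous_const.sub continuous_id).pow (n-1))
    have := (hcont.tendsto 0).mono_left (nhdsWithin_le_nhds (s := Set.Ioi (0:ℝ)))
    simpa using this
  have h2 : Filter.Tendsto (fun δ : ℝ => Real.exp ε * (Q x' y + δ * S))
      (nhdsWithin 0 (Set.Ioi 0)) (nhds (Real.exp ε * Q x' y)) := by
    have hcont : Continuous fun δ : ℝ => Real.exp ε * (Q x' y + δ * S) :=
      continuous_const.mul (continuous_const.add (continuous_id.mul continuous_const))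
    have := (hcont.tendsto 0).mono_left (nhdsWithin_le_nhds (s := Set.Ioi (0:ℝ)))
    simpa using this
  have hev : ∀ᶠ δ in nhdsWithin (0:ℝ) (Set.Ioi 0),
      Q x y * (1-δ)^(n-1) ≤ Real.exp ε * (Q x' y + δ * S) := by
    filter_upwards [Ioo_mem_nhdsGT_of_mem (Set.left_mem_Ico.mpr one_pos)] with δ hδ
    exact key δ hδ
  exact le_of_tendsto_of_tendsto h1 h2 hev
end

section
/- In the correlated binary database model with the counting-frequency Laplace mechanism, the conditional output density given D₁ = 0 at any y ≤ 0 equals (1/(2b(2ⁿ−1))) e^{y/b} [ 2ⁿη − 1 + (1−η)(1 + e^{−1/(b(n+1))})ⁿ ]. -/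
open Finset Real

def boolEquivFinset (n : ℕ) : (Fin n → Bool) ≃ Finset (Fin n) where
  toFun d := Finset.univ.filter (fun j => d j = true)
  invFun s j := j ∈ s
  left_inv := by intro d; funext j; simp
  right_inv := by intro s; ext j; simp

lemma sum_pow_filter_card {n : ℕ} (t : ℝ) :
    (∑ d : Fin n → Bool, t ^ (Finset.univ.filter (fun j => d j = true)).card)
      = (1 + t) ^ n := by
  have h1 : (∑ d : Fin n → Bool, t ^ (Finset.univ.filter (fun j => d j = true)).card)
      = ∑ s : Finset (Fin n), t ^ s.card :=
    Fintype.sum_equiv (boolEquivFinset n) _ _ (fun d => by simp [boolEquivFinset])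
  rw [h1]
  have h2 : (∑ s : Finset (Fin n), t ^ s.card)
      = ∑ s ∈ (Finset.univ : Finset (Fin n)).powerset, t ^ s.card := by
    rw [Finset.powerset_univ]
  rw [h2]
  have h := Finset.prod_add (fun _ : Fin n => t) (fun _ : Fin n => (1:ℝ)) Finset.univ
  simp only [Finset.prod_const, Finset.prod_const_one, one_pow, mul_one, Finset.card_univ,
    Fintype.card_fin] at h
  rw [← h]
  ring

/-- Closed form of the conditional output density given `D₁ = 0` at any `y ≤ 0` in
the correlated binary database model with the counting-frequency Laplace mechanism. -/
theorem cond_density_given_zero {n : ℕ} (hn : 1 ≤ n) (b η y : ℝ)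
    (hb : 0 < b) (hη0 : 0 < η) (hη1 : η < 1) (hy : y ≤ 0) :
    (∑ d : Fin n → Bool,
        (if d = (fun _ => false) then η else (1 - η) / ((2 : ℝ) ^ n - 1)) *
          ((1 / (2 * b)) * Real.exp (-|y -
            ((Finset.univ.filter (fun j => d j = true)).card : ℝ) / (n + 1)| / b))) =
    (1 / (2 * b * ((2 : ℝ) ^ n - 1))) * Real.exp (y / b) *
      ((2 : ℝ) ^ n * η - 1 +
        (1 - η) * (1 + Real.exp (-1 / (b * (n + 1)))) ^ n) := by
  have hb' : b ≠ 0 := ne_of_gt hb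
  have hn1 : (0:ℝ) < (n:ℝ) + 1 := by positivity
  set t : ℝ := Real.exp (-1 / (b * (n + 1))) with ht
  set A : ℝ := (1 / (2 * b)) * Real.exp (y / b) with hA
  have key : ∀ d : Fin n → Bool,
      (1 / (2 * b)) * Real.exp (-|y -
          ((Finset.univ.filter (fun j => d j = true)).card : ℝ) / (n + 1)| / b)
        = A * t ^ (Finset.univ.filter (fun j => d j = true)).card := by
    intro d
    set k := (Finset.univ.filter (fun j => d j = true)).card with hk
    have hk0 : (0:ℝ) ≤ (k:ℝ) / ((n:ℝ)+1) := by positivity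
    have habs : |y - (k:ℝ)/((n:ℝ)+1)| = -(y - (k:ℝ)/((n:ℝ)+1)) :=
      abs_of_nonpos (by linarith)
    rw [habs, hA, ht, ← Real.exp_nat_mul, mul_assoc, ← Real.exp_add]
    congr 2
    field_simp
    ring
  simp only [key]
  have hq : ∀ d : Fin n → Bool,
      (if d = (fun _ => false) then η else (1 - η) / ((2 : ℝ) ^ n - 1)) *
        (A * t ^ (Finset.univ.filter (fun j => d j = true)).card)
      = ((1 - η) / ((2 : ℝ) ^ n - 1)) *
          (A * t ^ (Finset.univ.filter (fun j => d j = true)).card) +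
        (if d = (fun _ => false) then
          (η - (1 - η) / ((2 : ℝ) ^ n - 1)) * A else 0) := by
    intro d
    by_cases h : d = (fun _ => false)
    · subst h
      simp
      ring
    · simp [h]
  simp only [hq]
  rw [Finset.sum_add_distrib, Finset.sum_ite_eq' Finset.univ (fun _ => false)
    (fun _ => (η - (1 - η) / ((2 : ℝ) ^ n - 1)) * A)]
  simp only [Finset.mem_univ, if_true]
  rw [← Finset.mul_sum]
  have hsum : (∑ d : Fin n → Bool,
      A * t ^ (Finset.univ.filter (fun j => d j = true)).card) = A * (1 + t) ^ n := by
    rw [← Finset.mul_sum, sum_pow_filter_card]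
  rw [hsum]
  have h2 : (2:ℝ) ≤ (2:ℝ) ^ n := by
    calc (2:ℝ) = 2 ^ 1 := (pow_one 2).symm
    _ ≤ 2 ^ n := pow_le_pow_right₀ one_le_two hn
  have h2' : (2:ℝ) ^ n - 1 ≠ 0 := by linarith
  rw [hA]
  field_simp
  ring
end

section
/- In the correlated binary database model with the counting-frequency Laplace mechanism, for every y ≤ 0 one has P_{Y|D₁=1}(y) ≤ P_{Y|D₁=0}(y). -/
open Finset Real

lemma sum_split_special {α : Type*} [Fintype α] [DecidableEq α]
    (t : α) (a q : ℝ) (g : α → ℝ) :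
    ∑ d : α, (if d = t then a else q) * g d
      = (a - q) * g t + ∑ d : α, q * g d := by
  have : ∀ d : α, (if d = t then a else q) * g d
      = (if d = t then (a - q) * g d else 0) + q * g d := by
    intro d
    by_cases h : d = t <;> simp [h] <;> ring
  rw [Finset.sum_congr rfl (fun d _ => this d), Finset.sum_add_distrib,
    Finset.sum_ite_eq' Finset.univ t (fun d => (a - q) * g d)]
  simp

/-- For every `y ≤ 0`, the conditional density given `D₁ = 1` is at most the
conditional density given `D₁ = 0`. -/
theorem cond_density_one_le_zero {n : ℕ} (hn : 1 ≤ n) (b η y : ℝ)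
    (hb : 0 < b) (hη0 : 0 < η) (hη1 : η < 1) (hηn : 1 ≤ (2 : ℝ) ^ n * η) (hy : y ≤ 0) :
    (∑ d : Fin n → Bool,
        (if d = (fun _ => true) then η else (1 - η) / ((2 : ℝ) ^ n - 1)) *
          ((1 / (2 * b)) * Real.exp (-|y - (1 +
            ((Finset.univ.filter (fun j => d j = true)).card : ℝ)) / (n + 1)| / b))) ≤
    (∑ d : Fin n → Bool,
        (if d = (fun _ => false) then η else (1 - η) / ((2 : ℝ) ^ n - 1)) *
          ((1 / (2 * b)) * Real.exp (-|y -
            ((Finset.univ.filter (fun j => d j = true)).card : ℝ) / (n + 1)| / b))) := by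
  have hNpos : (0:ℝ) < (n:ℝ) + 1 := by positivity
  have h2n : (1:ℝ) < 2 ^ n := by
    calc (1:ℝ) < 2 ^ 1 := by norm_num
    _ ≤ 2 ^ n := by exact pow_le_pow_right₀ (by norm_num) hn
  set q : ℝ := (1 - η) / ((2:ℝ)^n - 1) with hq
  have hq0 : 0 ≤ q := div_nonneg (by linarith) (by linarith)
  have hηq : q ≤ η := by
    rw [hq, div_le_iff₀ (by linarith)]
    nlinarith
  set f : ℝ → ℝ := fun c => (1/(2*b)) * Real.exp (-|y - c| / b) with hf
  have hfmono : ∀ c c' : ℝ, 0 ≤ c → c ≤ c' → f c' ≤ f c := by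
    intro c c' hc hcc
    have h1 : |y - c| = c - y := by rw [abs_of_nonpos (by linarith)]; ring
    have h2 : |y - c'| = c' - y := by rw [abs_of_nonpos (by linarith)]; ring
    simp only [hf, h1, h2]
    have hexp : Real.exp (-(c'-y)/b) ≤ Real.exp (-(c-y)/b) := by
      apply Real.exp_le_exp.mpr
      gcongr
    exact mul_le_mul_of_nonneg_left hexp (by positivity)
  rw [sum_split_special (fun _ => true) η q
      (fun d => f ((1 + ((Finset.univ.filter (fun j => d j = true)).card : ℝ)) / (n + 1))),
    sum_split_special (fun _ => false) η q
      (fun d => f (((Finset.univ.filter (fun j => d j = true)).card : ℝ) / (n + 1)))]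
  have hT : ((Finset.univ.filter (fun j : Fin n => (fun _ => true) j = true)).card : ℝ) = n := by
    simp
  have hF : ((Finset.univ.filter (fun j : Fin n => (fun _ => false) j = true)).card : ℝ) = 0 := by
    simp
  have hmain : ∀ d : Fin n → Bool,
      q * f ((1 + ((Finset.univ.filter (fun j => d j = true)).card : ℝ)) / (n + 1))
        ≤ q * f (((Finset.univ.filter (fun j => d j = true)).card : ℝ) / (n + 1)) := by
    intro d
    apply mul_le_mul_of_nonneg_left _ hq0
    apply hfmono
    · positivity
    · gcongr
      linarith
  have hspec : (η - q) * f ((1 + ((Finset.univ.filter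
        (fun j : Fin n => (fun _ => true) j = true)).card : ℝ)) / (n + 1))
      ≤ (η - q) * f (((Finset.univ.filter
        (fun j : Fin n => (fun _ => false) j = true)).card : ℝ) / (n + 1)) := by
    rw [hT, hF]
    apply mul_le_mul_of_nonneg_left _ (by linarith)
    have h1 : (1 + (n:ℝ)) / (n + 1) = 1 := by rw [add_comm]; field_simp
    have h0 : (0:ℝ) / (n + 1) = 0 := by simp
    rw [h1, h0]
    exact hfmono 0 1 le_rfl zero_le_one
  exact add_le_add hspec (Finset.sum_le_sum fun d _ => hmain d)
end

section
/- In the correlated binary database model with the counting-frequency Laplace mechanism with scale b = 1/(ε(n+1)), for every y ≤ 0 the ratio P_{Y|D₁=0}(y)/P_Y(y) is at least (2ⁿη + (1+e^{−ε})ⁿ(1−η) − 1) / (2ⁿη α + (2 e^{−ε})ⁿ η e^{−ε}(1−α) + (1+e^{−ε})ⁿ(1−η)). -/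
open Finset Real


lemma sum_exp_pow (n : ℕ) (E : ℝ) :
    ∑ d : Fin n → Bool, E ^ (Finset.univ.filter (fun j => d j = true)).card = (1 + E) ^ n := by
  have h : ∀ d : Fin n → Bool,
      E ^ (Finset.univ.filter (fun j => d j = true)).card
        = ∏ j : Fin n, (if d j = true then E else 1) := by
    intro d
    rw [Finset.prod_ite, Finset.prod_const, Finset.prod_const, one_pow, mul_one]
  simp_rw [h]
  have h2 := Finset.prod_univ_sum (fun _ : Fin n => (Finset.univ : Finset Bool))
    (fun _ b => if b = true then E else 1)
  rw [Fintype.piFinset_univ] at h2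
  rw [← h2]
  simp [add_comm]

set_option maxHeartbeats 1000000 in
/-- With Laplace scale `b = 1/(ε(n+1))`, for every `y ≤ 0` the ratio
`P_{Y|D₁=0}(y) / P_Y(y)` is at least the stated lower bound. -/
theorem ratio_lower_bound {n : ℕ} (hn : 1 ≤ n) (ε α η y : ℝ)
    (hε : 0 < ε) (hα0 : 0 < α) (hα : α < 1 / 2) (hη0 : 0 < η) (hη1 : η < 1)
    (hηn : 1 < (2 : ℝ) ^ n * η) (hy : y ≤ 0)
    (P0 P1 : ℝ)
    (hP0 : P0 = ∑ d : Fin n → Bool,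
        (if d = (fun _ => false) then η else (1 - η) / ((2 : ℝ) ^ n - 1)) *
          ((ε * (n + 1) / 2) * Real.exp (-(ε * (n + 1)) * |y -
            ((Finset.univ.filter (fun j => d j = true)).card : ℝ) / (n + 1)|)))
    (hP1 : P1 = ∑ d : Fin n → Bool,
        (if d = (fun _ => true) then η else (1 - η) / ((2 : ℝ) ^ n - 1)) *
          ((ε * (n + 1) / 2) * Real.exp (-(ε * (n + 1)) * |y - (1 +
            ((Finset.univ.filter (fun j => d j = true)).card : ℝ)) / (n + 1)|))) :
    ((2 : ℝ) ^ n * η + (1 + Real.exp (-ε)) ^ n * (1 - η) - 1) /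
      ((2 : ℝ) ^ n * η * α + (2 * Real.exp (-ε)) ^ n * η * Real.exp (-ε) * (1 - α) +
        (1 + Real.exp (-ε)) ^ n * (1 - η)) ≤
    P0 / (α * P0 + (1 - α) * P1) := by
  set E : ℝ := Real.exp (-ε) with hE
  set C : ℝ := (ε * (n + 1) / 2) * Real.exp (ε * (n + 1) * y) with hC
  set w : ℝ := (1 - η) / ((2 : ℝ) ^ n - 1) with hw
  set S : ℝ := (1 + E) ^ n with hS
  have hn1 : (0 : ℝ) < (n : ℝ) + 1 := by positivity
  have hE0 : 0 < E := Real.exp_pos _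
  have hE1 : E < 1 := by
    rw [hE, Real.exp_lt_one_iff]; linarith
  have hC0 : 0 < C := by
    rw [hC]; positivity
  have h2n : (1 : ℝ) < (2 : ℝ) ^ n := one_lt_pow₀ (by norm_num) (by omega)
  have h2n' : ((2 : ℝ) ^ n - 1) ≠ 0 := by linarith
  have hw0 : 0 < w := by
    rw [hw]; apply div_pos <;> linarith
  have hexp0 : ∀ k : ℕ, Real.exp (-(ε * (n + 1)) * |y - (k : ℝ) / (n + 1)|)
      = Real.exp (ε * (n + 1) * y) * E ^ k := by
    intro k
    have hk0 : (0 : ℝ) ≤ (k : ℝ) / ((n : ℝ) + 1) := by positivity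
    have habs : |y - (k : ℝ) / ((n : ℝ) + 1)| = (k : ℝ) / ((n : ℝ) + 1) - y := by
      rw [abs_of_nonpos (by linarith)]; ring
    rw [habs, hE, ← Real.exp_nat_mul, ← Real.exp_add]
    congr 1
    field_simp
    ring
  have hexp1 : ∀ k : ℕ, Real.exp (-(ε * (n + 1)) * |y - (1 + (k : ℝ)) / (n + 1)|)
      = Real.exp (ε * (n + 1) * y) * (E * E ^ k) := by
    intro k
    have hk0 : (0 : ℝ) ≤ (1 + (k : ℝ)) / ((n : ℝ) + 1) := by positivity
    have habs : |y - (1 + (k : ℝ)) / ((n : ℝ) + 1)| = (1 + (k : ℝ)) / ((n : ℝ) + 1) - y := by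
      rw [abs_of_nonpos (by linarith)]; ring
    rw [habs, hE, ← Real.exp_nat_mul, ← Real.exp_add, ← Real.exp_add]
    congr 1
    field_simp
    ring
  -- P0 closed form
  have hP0' : P0 = C * (η + w * (S - 1)) := by
    rw [hP0]
    have step : ∀ d : Fin n → Bool,
        (if d = (fun _ => false) then η else w) *
          ((ε * (n + 1) / 2) * Real.exp (-(ε * (n + 1)) * |y -
            ((Finset.univ.filter (fun j => d j = true)).card : ℝ) / (n + 1)|))
        = (w * C) * E ^ (Finset.univ.filter (fun j => d j = true)).card
          + (if d = (fun _ => false) then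
              (η - w) * (C * E ^ (Finset.univ.filter (fun j => d j = true)).card) else 0) := by
      intro d
      rw [hexp0, hC]
      split <;> ring
    simp_rw [step]
    rw [Finset.sum_add_distrib, Finset.sum_ite_eq' Finset.univ (fun _ => false)]
    simp only [Finset.mem_univ, if_true]
    have hc0 : (Finset.univ.filter (fun j : Fin n => (fun _ : Fin n => false) j = true)) = ∅ := by
      simp
    rw [hc0, Finset.card_empty, pow_zero, ← Finset.mul_sum, sum_exp_pow, hS]
    ring
  -- P1 closed form
  have hP1' : P1 = C * E * (η * E ^ n + w * (S - E ^ n)) := by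
    rw [hP1]
    have step : ∀ d : Fin n → Bool,
        (if d = (fun _ => true) then η else w) *
          ((ε * (n + 1) / 2) * Real.exp (-(ε * (n + 1)) * |y - (1 +
            ((Finset.univ.filter (fun j => d j = true)).card : ℝ)) / (n + 1)|))
        = (w * C * E) * E ^ (Finset.univ.filter (fun j => d j = true)).card
          + (if d = (fun _ => true) then
              (η - w) * (C * (E * E ^ (Finset.univ.filter (fun j => d j = true)).card)) else 0) := by
      intro d
      rw [hexp1, hC]
      split <;> ring
    simp_rw [step]
    rw [Finset.sum_add_distrib, Finset.sum_ite_eq' Finset.univ (fun _ => true)]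
    simp only [Finset.mem_univ, if_true]
    simp only [Finset.filter_true, Finset.card_univ, Fintype.card_fin]
    rw [← Finset.mul_sum, sum_exp_pow, hS]
    ring
  -- algebra
  set A : ℝ := (2 : ℝ) ^ n * η + S * (1 - η) - 1 with hA
  set B : ℝ := ((2 : ℝ) ^ n - 1) * η * E ^ n + (1 - η) * (S - E ^ n) with hB
  have hEn0 : 0 < E ^ n := pow_pos hE0 n
  have hEnS : E ^ n ≤ S := by
    rw [hS]
    exact pow_le_pow_left₀ hE0.le (by linarith) n
  have hS1 : (1 : ℝ) ≤ S := by
    rw [hS]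
    exact one_le_pow₀ (by linarith)
  have hA0 : 0 < A := by
    have h1 : 0 ≤ S * (1 - η) := mul_nonneg (by linarith) (by linarith)
    rw [hA]; nlinarith
  have hB0 : 0 ≤ B := by
    rw [hB]
    have h1 : 0 ≤ ((2 : ℝ) ^ n - 1) * η * E ^ n :=
      mul_nonneg (mul_nonneg (by linarith) hη0.le) hEn0.le
    have h2 : 0 ≤ (1 - η) * (S - E ^ n) := mul_nonneg (by linarith) (by linarith)
    linarith
  have hw' : w * ((2:ℝ)^n - 1) = 1 - η := by
    rw [hw]; field_simp
  have hA' : A = ((2:ℝ)^n - 1) * (η + w * (S - 1)) := by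
    rw [hA]; linear_combination (1 - S) * hw'
  have hB' : B = ((2:ℝ)^n - 1) * (η * E ^ n + w * (S - E ^ n)) := by
    rw [hB]; linear_combination (-(S - E ^ n)) * hw'
  set K : ℝ := C / ((2:ℝ)^n - 1) with hKdef
  have hcancel : ∀ x : ℝ, K * (((2:ℝ)^n - 1) * x) = C * x := by
    intro x
    rw [hKdef, div_mul_eq_mul_div, mul_comm ((2:ℝ)^n - 1) x, ← mul_assoc,
      mul_div_assoc, div_self h2n', mul_one]
  have hK0 : 0 < K := by
    rw [hKdef]; apply div_pos hC0; linarith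
  have hP0'' : P0 = K * A := by
    rw [hP0', hA', hcancel]
  have hP1'' : P1 = K * (E * B) := by
    rw [hP1', hB']
    rw [show E * (((2:ℝ)^n - 1) * (η * E ^ n + w * (S - E ^ n)))
        = ((2:ℝ)^n - 1) * (E * (η * E ^ n + w * (S - E ^ n))) from by ring, hcancel]
    ring
  have hdenom : α * P0 + (1 - α) * P1 = K * (α * A + (1 - α) * (E * B)) := by
    rw [hP0'', hP1'']; ring
  rw [hdenom, hP0'', mul_div_mul_left _ _ (ne_of_gt hK0)]
  set D : ℝ := (2 : ℝ) ^ n * η * α + (2 * E) ^ n * η * E * (1 - α) + S * (1 - η) with hD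
  have hd0 : 0 < α * A + (1 - α) * (E * B) := by
    have h1 : 0 < α * A := mul_pos hα0 hA0
    have h2 : 0 ≤ (1 - α) * (E * B) :=
      mul_nonneg (by linarith) (mul_nonneg hE0.le hB0)
    linarith
  have hkey : E * (S - E ^ n) ≤ S := by
    have h1 : E * (S - E ^ n) ≤ S - E ^ n :=
      mul_le_of_le_one_left (by linarith) hE1.le
    linarith
  have hle : α * A + (1 - α) * (E * B) ≤ D := by
    have expand : D - (α * A + (1 - α) * (E * B))
        = (1 - α) * (η * (E * E ^ n)) + α
          + (1 - α) * ((1 - η) * (S - E * (S - E ^ n))) := by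
      rw [hA, hB, hD, mul_pow]; ring
    have h2 : 0 ≤ (1 - α) * (η * (E * E ^ n)) :=
      mul_nonneg (by linarith) (mul_nonneg hη0.le (mul_nonneg hE0.le hEn0.le))
    have h3 : 0 ≤ (1 - α) * ((1 - η) * (S - E * (S - E ^ n))) :=
      mul_nonneg (by linarith) (mul_nonneg (by linarith) (by linarith))
    linarith
  exact div_le_div_of_nonneg_left hA0.le hd0 hle
end

section
/- For every δ > 0 and ε > 0 there exist n, a distribution on binary databases X = (D₁,…,D_{n+1}), an ε-differentially private mechanism (the Laplace mechanism for the empirical frequency query), and an output y such that ℓ(D₁→y) > log(1/min_d P_{D₁}(d)) − δ. Concretely: with the correlated model with parameters α ∈ (0,1/2), η ∈ (0,1) and Laplace scale 1/(ε(n+1)), for any δ > 0 there exists N such that for all n ≥ N and all y ≤ 0, log(P_{Y|D₁=0}(y)/P_Y(y)) > log(1/α) − δ. -/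
open Finset Real

set_option maxHeartbeats 1000000 in
lemma sum_pow_card (n : ℕ) (r : ℝ) :
    ∑ d : Fin n → Bool, r ^ (Finset.univ.filter (fun j => d j = true)).card
      = (1 + r) ^ n := by
  have h : ∀ d : Fin n → Bool,
      r ^ (Finset.univ.filter (fun j => d j = true)).card
        = ∏ j : Fin n, (if d j = true then r else 1) := by
    intro d
    rw [Finset.prod_ite, Finset.prod_const, Finset.prod_const, one_pow, mul_one]
  simp_rw [h]
  calc ∑ d : Fin n → Bool, ∏ j, (if d j = true then r else 1)
      = ∑ d ∈ Fintype.piFinset (fun _ : Fin n => (Finset.univ : Finset Bool)),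
          ∏ j, (if d j = true then r else 1) := by rw [Fintype.piFinset_univ]
    _ = ∏ _j : Fin n, ∑ b : Bool, (if b = true then r else 1) :=
        (Finset.prod_univ_sum (fun _ : Fin n => (Finset.univ : Finset Bool))
          (fun _ b => if b = true then r else 1)).symm
    _ = (1 + r) ^ n := by simp [add_comm]

set_option maxHeartbeats 2000000 in
/-- Main theorem: for every `δ > 0` (and every `ε > 0`), in the correlated binary
database model with the `ε`-DP counting-frequency Laplace mechanism, there exists `N`
such that for all `n ≥ N` and all outputs `y ≤ 0`,
`ℓ(D₁ → y) = log (P_{Y|D₁=0}(y) / P_Y(y)) > log(1/α) - δ = ε_max(D₁) - δ`. -/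
theorem dp_pml_arbitrarily_weak (ε α η δ : ℝ) (hε : 0 < ε) (hα0 : 0 < α)
    (hα : α < 1 / 2) (hη0 : 0 < η) (hη1 : η < 1) (hδ : 0 < δ) :
    ∃ N : ℕ, ∀ n ≥ N, ∀ y : ℝ, y ≤ 0 →
      Real.log
        ((∑ d : Fin n → Bool,
            (if d = (fun _ => false) then η else (1 - η) / ((2 : ℝ) ^ n - 1)) *
              ((ε * (n + 1) / 2) * Real.exp (-(ε * (n + 1)) * |y -
                ((Finset.univ.filter (fun j => d j = true)).card : ℝ) / (n + 1)|))) /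
          (α * (∑ d : Fin n → Bool,
            (if d = (fun _ => false) then η else (1 - η) / ((2 : ℝ) ^ n - 1)) *
              ((ε * (n + 1) / 2) * Real.exp (-(ε * (n + 1)) * |y -
                ((Finset.univ.filter (fun j => d j = true)).card : ℝ) / (n + 1)|))) +
            (1 - α) * (∑ d : Fin n → Bool,
              (if d = (fun _ => true) then η else (1 - η) / ((2 : ℝ) ^ n - 1)) *
                ((ε * (n + 1) / 2) * Real.exp (-(ε * (n + 1)) * |y - (1 +
                  ((Finset.univ.filter (fun j => d j = true)).card : ℝ)) / (n + 1)|))))) >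
      Real.log (1 / α) - δ := by
  set a : ℝ := Real.exp (-ε) with ha_def
  have ha0 : 0 < a := Real.exp_pos _
  have ha1 : a < 1 := Real.exp_lt_one_iff.mpr (by linarith)
  set b : ℝ := (1 + a) / 2 with hb_def
  have hb0 : 0 ≤ b := by positivity
  have hb1 : b < 1 := by rw [hb_def]; linarith
  set t : ℝ := α * (Real.exp δ - 1) * η / (1 - α) with ht_def
  have hδ1 : 1 < Real.exp δ := by nlinarith [Real.add_one_le_exp δ]
  have ht0 : 0 < t :=
    div_pos (mul_pos (mul_pos hα0 (by linarith)) hη0) (by linarith)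
  -- get N from convergence
  have htend : Filter.Tendsto (fun n : ℕ => η * a ^ n + 2 * (1 - η) * b ^ n)
      Filter.atTop (nhds 0) := by
    have h1 := (tendsto_pow_atTop_nhds_zero_of_lt_one ha0.le ha1).const_mul η
    have h2 := (tendsto_pow_atTop_nhds_zero_of_lt_one hb0 hb1).const_mul (2 * (1 - η))
    simpa using h1.add h2
  obtain ⟨N, hN⟩ := Filter.eventually_atTop.mp
    (htend.eventually_lt_const ht0)
  refine ⟨max N 1, ?_⟩
  intro n hn y hy
  have hn1 : 1 ≤ n := le_trans (le_max_right N 1) hn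
  have hnN : N ≤ n := le_trans (le_max_left N 1) hn
  have hSBsmall := hN n hnN
  have hn1R : (1 : ℝ) ≤ (n : ℝ) := by exact_mod_cast hn1
  have hnpos : (0 : ℝ) < (n : ℝ) + 1 := by linarith
  have h2n : (2 : ℝ) ≤ (2 : ℝ) ^ n := by
    calc (2 : ℝ) = 2 ^ 1 := (pow_one 2).symm
    _ ≤ 2 ^ n := pow_le_pow_right₀ (by norm_num) hn1
  have h2n1 : (0 : ℝ) < (2 : ℝ) ^ n - 1 := by linarith
  set q : ℝ := (1 - η) / ((2 : ℝ) ^ n - 1) with hq_def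
  have hq0 : 0 ≤ q := by
    apply div_nonneg (by linarith) (by linarith)
  set c : ℝ := ε * (n + 1) / 2 with hc_def
  have hc0 : 0 < c := by positivity
  set K : ℝ := c * Real.exp (ε * (n + 1) * y) with hK_def
  have hK0 : 0 < K := by positivity
  set k : (Fin n → Bool) → ℕ := fun d => (Finset.univ.filter (fun j => d j = true)).card
    with hk_def
  set SA : ℝ := ∑ d : Fin n → Bool,
      (if d = (fun _ => false) then η else q) * a ^ (k d) with hSA_def
  set SB : ℝ := ∑ d : Fin n → Bool,
      (if d = (fun _ => true) then η else q) * a ^ (k d) with hSB_def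
  -- rewrite the A sum
  have hterm0 : ∀ d : Fin n → Bool,
      c * Real.exp (-(ε * (n + 1)) * |y - ((k d : ℝ)) / (n + 1)|)
        = K * a ^ (k d) := by
    intro d
    have hknn : (0 : ℝ) ≤ (k d : ℝ) / (n + 1) := by positivity
    rw [abs_of_nonpos (by linarith)]
    have hexp : -(ε * (n + 1)) * -(y - (k d : ℝ) / (n + 1))
        = ε * (n + 1) * y + (k d : ℝ) * (-ε) := by
      field_simp
      ring
    rw [hexp, Real.exp_add, Real.exp_nat_mul, hK_def, ha_def]
    ring
  have hterm1 : ∀ d : Fin n → Bool,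
      c * Real.exp (-(ε * (n + 1)) * |y - (1 + (k d : ℝ)) / (n + 1)|)
        = K * (a * a ^ (k d)) := by
    intro d
    have hknn : (0 : ℝ) ≤ (1 + (k d : ℝ)) / (n + 1) := by positivity
    rw [abs_of_nonpos (by linarith)]
    have hexp : -(ε * (n + 1)) * -(y - (1 + (k d : ℝ)) / (n + 1))
        = ε * (n + 1) * y + (-ε + (k d : ℝ) * (-ε)) := by
      field_simp
      ring
    rw [hexp, Real.exp_add, Real.exp_add, Real.exp_nat_mul, hK_def, ha_def]
    ring
  have hA : (∑ d : Fin n → Bool,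
      (if d = (fun _ => false) then η else q) *
        (c * Real.exp (-(ε * (n + 1)) * |y - ((k d : ℝ)) / (n + 1)|)))
      = K * SA := by
    rw [hSA_def, Finset.mul_sum]
    apply Finset.sum_congr rfl
    intro d _
    rw [hterm0 d]
    ring
  have hB : (∑ d : Fin n → Bool,
      (if d = (fun _ => true) then η else q) *
        (c * Real.exp (-(ε * (n + 1)) * |y - (1 + (k d : ℝ)) / (n + 1)|)))
      = K * (a * SB) := by
    rw [hSB_def, Finset.mul_sum, Finset.mul_sum]
    apply Finset.sum_congr rfl
    intro d _
    rw [hterm1 d]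
    ring
  -- bounds on SA and SB
  have hterm_nonneg : ∀ d : Fin n → Bool,
      0 ≤ (if d = (fun _ => false) then η else q) * a ^ (k d) := by
    intro d
    apply mul_nonneg _ (by positivity)
    split <;> [exact hη0.le; exact hq0]
  have hkF : k (fun _ => false) = 0 := by simp [hk_def]
  have hkT : k (fun _ => true) = n := by simp [hk_def]
  have hSAη : η ≤ SA := by
    have := Finset.single_le_sum (f := fun d : Fin n → Bool =>
        (if d = (fun _ => false) then η else q) * a ^ (k d))
      (fun d _ => hterm_nonneg d) (Finset.mem_univ (fun _ => false))
    rw [hSA_def]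
    refine le_trans (le_of_eq ?_) this
    simp [hkF]
  have hSA0 : 0 < SA := lt_of_lt_of_le hη0 hSAη
  have hSB0 : 0 ≤ SB := by
    apply Finset.sum_nonneg
    intro d _
    apply mul_nonneg _ (by positivity)
    split <;> [exact hη0.le; exact hq0]
  have hSBle : SB ≤ η * a ^ n + q * (1 + a) ^ n := by
    have hpt : ∀ d : Fin n → Bool,
        (if d = (fun _ => true) then η else q) * a ^ (k d)
          ≤ (if d = (fun _ => true) then η * a ^ n else 0) + q * a ^ (k d) := by
      intro d
      by_cases hd : d = (fun _ => true)
      · subst hd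
        simp [hkT]
        positivity
      · simp [hd]
    calc SB ≤ ∑ d : Fin n → Bool,
          ((if d = (fun _ => true) then η * a ^ n else 0) + q * a ^ (k d)) :=
        Finset.sum_le_sum (fun d _ => hpt d)
      _ = η * a ^ n + q * (1 + a) ^ n := by
        rw [Finset.sum_add_distrib, Finset.sum_ite_eq' Finset.univ (fun _ => true)
          (fun _ => η * a ^ n)]
        simp only [Finset.mem_univ, if_true]
        rw [← Finset.mul_sum]
        congr 1
        rw [hk_def]
        exact congrArg (q * ·) (sum_pow_card n a)
  have hSBt : SB < t := by
    refine lt_of_le_of_lt (hSBle.trans ?_) hSBsmall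
    have h1 : q * (1 + a) ^ n ≤ 2 * (1 - η) * b ^ n := by
      have hq' : q * (1 + a) ^ n = (1 - η) * (1 + a) ^ n / (2 ^ n - 1) := by
        rw [hq_def]; ring
      have h2p : (0:ℝ) < (2:ℝ) ^ n := by positivity
      rw [hq', hb_def, div_pow, div_le_iff₀ h2n1]
      rw [show 2 * (1 - η) * ((1 + a) ^ n / 2 ^ n) * (2 ^ n - 1)
          = (1 - η) * (1 + a) ^ n * (2 * (2 ^ n - 1) / 2 ^ n) by field_simp]
      have h2 : (1:ℝ) ≤ 2 * (2 ^ n - 1) / 2 ^ n := by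
        rw [le_div_iff₀ h2p]; linarith
      exact le_mul_of_one_le_right
        (mul_nonneg (by linarith) (pow_nonneg (by linarith) n)) h2
    linarith
  -- core inequality
  clear_value a b t q c K k SA SB
  have hD0 : 0 < α * SA + (1 - α) * (a * SB) := by
    have h1 : 0 ≤ (1 - α) * (a * SB) := mul_nonneg (by linarith) (mul_nonneg ha0.le hSB0)
    nlinarith [mul_pos hα0 hSA0]
  have hed : Real.exp (-δ) * Real.exp δ = 1 := by
    rw [← Real.exp_add]; simp
  have hcore : Real.exp (-δ) / α < SA / (α * SA + (1 - α) * (a * SB)) := by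
    rw [div_lt_div_iff₀ hα0 hD0]
    have h1 : a * SB ≤ SB := by nlinarith
    have h2 : SB < t := hSBt
    have hone : (1 : ℝ) - α ≠ 0 := by linarith
    have h3 : (1 - α) * t = α * (Real.exp δ - 1) * η := by
      rw [ht_def]; field_simp
    have hednn : 0 < Real.exp (-δ) := Real.exp_pos _
    have hedlt : Real.exp (-δ) < 1 := Real.exp_lt_one_iff.mpr (by linarith)
    calc Real.exp (-δ) * (α * SA + (1 - α) * (a * SB))
        = Real.exp (-δ) * α * SA + Real.exp (-δ) * ((1 - α) * (a * SB)) := by ring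
      _ ≤ Real.exp (-δ) * α * SA + Real.exp (-δ) * ((1 - α) * SB) := by
          have hx := mul_le_mul_of_nonneg_left h1 (show (0:ℝ) ≤ 1 - α by linarith)
          have hy := mul_le_mul_of_nonneg_left hx hednn.le
          linarith
      _ < Real.exp (-δ) * α * SA + Real.exp (-δ) * ((1 - α) * t) := by
          have hx := mul_lt_mul_of_pos_left
            (mul_lt_mul_of_pos_left h2 (show (0:ℝ) < 1 - α by linarith)) hednn
          linarith
      _ = Real.exp (-δ) * α * SA + α * η * (1 - Real.exp (-δ)) := by
          rw [h3]; linear_combination α * η * hed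
      _ ≤ Real.exp (-δ) * α * SA + α * SA * (1 - Real.exp (-δ)) := by
          have hx := mul_le_mul_of_nonneg_right (mul_le_mul_of_nonneg_left hSAη hα0.le)
            (show (0:ℝ) ≤ 1 - Real.exp (-δ) by linarith)
          linarith
      _ = SA * α := by ring
  -- convert to log statement
  simp only [hk_def] at hA hB
  rw [hA, hB]
  have hfrac : (K * SA) / (α * (K * SA) + (1 - α) * (K * (a * SB)))
      = SA / (α * SA + (1 - α) * (a * SB)) := by
    rw [show α * (K * SA) + (1 - α) * (K * (a * SB))
        = K * (α * SA + (1 - α) * (a * SB)) by ring]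
    rw [mul_div_mul_left _ _ (ne_of_gt hK0)]
  rw [hfrac]
  have hlog := Real.log_lt_log (by positivity) hcore
  rw [Real.log_div (ne_of_gt (Real.exp_pos _)) (ne_of_gt hα0), Real.log_exp] at hlog
  rw [show (1 : ℝ) / α = α⁻¹ by rw [one_div], Real.log_inv]
  linarith
end

section
/- Pointwise maximal leakage satisfies the pre-processing inequality: if U − X − Y is a Markov chain on finite sets, then for every y with P_Y(y) > 0, ℓ(U→y) ≤ ℓ(X→y). -/
open Finset Real

/-- Pre-processing inequality for PML: if `U − X − Y` is a Markov chain, then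
`ℓ(U→y) ≤ ℓ(X→y)` for every `y` with `P_Y(y) > 0`. -/
theorem pml_preprocessing {U X Y : Type*} [Fintype U] [Nonempty U]
    [Fintype X] [Nonempty X] [Fintype Y]
    (pUX : U → X → ℝ) (hUX : ∀ u x, 0 ≤ pUX u x) (hsum : ∑ u, ∑ x, pUX u x = 1)
    (k : X → Y → ℝ) (hk : ∀ x y, 0 ≤ k x y) (hks : ∀ x, ∑ y, k x y = 1)
    (pU : U → ℝ) (hpU : ∀ u, pU u = ∑ x, pUX u x) (hpUpos : ∀ u, 0 < pU u)
    (pX : X → ℝ) (hpX : ∀ x, pX x = ∑ u, pUX u x) (hpXpos : ∀ x, 0 < pX x)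
    (pY : Y → ℝ) (hpY : ∀ y, pY y = ∑ x, pX x * k x y)
    (y : Y) (hy : 0 < pY y) :
    Real.log (Finset.univ.sup' Finset.univ_nonempty
      (fun u => ((∑ x, pUX u x * k x y) / pY y) / pU u)) ≤
    Real.log (Finset.univ.sup' Finset.univ_nonempty
      (fun x => ((pX x * k x y) / pY y) / pX x)) := by
  set S := Finset.univ.sup' Finset.univ_nonempty
      (fun x => ((pX x * k x y) / pY y) / pX x) with hS
  -- Each RHS term simplifies to k x y / pY y
  have hRHS : ∀ x : X, ((pX x * k x y) / pY y) / pX x = k x y / pY y := by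
    intro x
    field_simp [(hpXpos x).ne', hy.ne']
  have hkS : ∀ x : X, k x y ≤ S * pY y := by
    intro x
    have h1 : k x y / pY y ≤ S := by
      rw [← hRHS x]
      exact Finset.le_sup' (fun x => ((pX x * k x y) / pY y) / pX x) (Finset.mem_univ x)
    calc k x y = (k x y / pY y) * pY y := by field_simp
    _ ≤ S * pY y := by
        exact mul_le_mul_of_nonneg_right h1 hy.le
  -- every LHS term is ≤ S
  have hle : ∀ u : U, ((∑ x, pUX u x * k x y) / pY y) / pU u ≤ S := by
    intro u
    have hnum : (∑ x, pUX u x * k x y) ≤ pU u * (S * pY y) := by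
      rw [hpU u, Finset.sum_mul]
      exact Finset.sum_le_sum fun x _ =>
        mul_le_mul_of_nonneg_left (hkS x) (hUX u x)
    rw [div_div, div_le_iff₀ (mul_pos hy (hpUpos u))]
    calc (∑ x, pUX u x * k x y) ≤ pU u * (S * pY y) := hnum
    _ = S * (pY y * pU u) := by ring
  -- LHS sup is positive
  have hpos : 0 < Finset.univ.sup' Finset.univ_nonempty
      (fun u => ((∑ x, pUX u x * k x y) / pY y) / pU u) := by
    have hsumpos : 0 < ∑ u, ∑ x, pUX u x * k x y := by
      have : pY y = ∑ u, ∑ x, pUX u x * k x y := by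
        rw [hpY y, Finset.sum_comm]
        congr 1; ext x
        rw [hpX x, Finset.sum_mul]
      linarith
    obtain ⟨u, _, hu⟩ : ∃ u ∈ Finset.univ, 0 < ∑ x, pUX u x * k x y := by
      by_contra h
      push_neg at h
      have : ∑ u, ∑ x, pUX u x * k x y ≤ 0 :=
        Finset.sum_nonpos fun u hu => h u hu
      linarith
    have : (0:ℝ) < ((∑ x, pUX u x * k x y) / pY y) / pU u :=
      div_pos (div_pos hu hy) (hpUpos u)
    exact lt_of_lt_of_le this
      (Finset.le_sup' (fun u => ((∑ x, pUX u x * k x y) / pY y) / pU u) (Finset.mem_univ u))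
  exact Real.log_le_log hpos (Finset.sup'_le _ _ fun u _ => hle u)
end

section
/- Pointwise maximal leakage satisfies the post-processing inequality: if X − Y − Z is a Markov chain on finite sets, then for every z with P_Z(z) > 0, ℓ(X→z) ≤ max_{y : P(Y=y|Z=z)>0} ℓ(X→y). -/
open Finset Real

open scoped Classical in
/-- Post-processing inequality for PML: if `X − Y − Z` is a Markov chain, then
`ℓ(X→z) ≤ max_{y : P(Y=y|Z=z)>0} ℓ(X→y)`. -/
theorem pml_postprocessing {X Y Z : Type*} [Fintype X] [Nonempty X]
    [Fintype Y] [Fintype Z]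
    (pXY : X → Y → ℝ) (h1 : ∀ x y, 0 ≤ pXY x y) (hs : ∑ x, ∑ y, pXY x y = 1)
    (k : Y → Z → ℝ) (hk : ∀ y z, 0 ≤ k y z) (hks : ∀ y, ∑ z, k y z = 1)
    (pX : X → ℝ) (hpX : ∀ x, pX x = ∑ y, pXY x y) (hpXpos : ∀ x, 0 < pX x)
    (pY : Y → ℝ) (hpY : ∀ y, pY y = ∑ x, pXY x y)
    (z : Z) (pZ : ℝ) (hpZ : pZ = ∑ y, pY y * k y z) (hpZpos : 0 < pZ)
    (hne : (Finset.univ.filter (fun y => 0 < pY y * k y z)).Nonempty) :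
    Real.log (Finset.univ.sup' Finset.univ_nonempty
      (fun x => ((∑ y, pXY x y * k y z) / pZ) / pX x)) ≤
    (Finset.univ.filter (fun y => 0 < pY y * k y z)).sup' hne
      (fun y => Real.log (Finset.univ.sup' Finset.univ_nonempty
        (fun x => (pXY x y / pY y) / pX x))) := by
  classical
  set M : Y → ℝ := fun y => Finset.univ.sup' Finset.univ_nonempty
      (fun x => (pXY x y / pY y) / pX x) with hM
  set L : ℝ := Finset.univ.sup' Finset.univ_nonempty
      (fun x => ((∑ y, pXY x y * k y z) / pZ) / pX x) with hL
  have hpYnn : ∀ y, 0 ≤ pY y := fun y => by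
    rw [hpY]; exact Finset.sum_nonneg fun x _ => h1 x y
  have hXY_le_pY : ∀ x y, pXY x y ≤ pY y := fun x y => by
    rw [hpY]; exact Finset.single_le_sum (fun x _ => h1 x y) (Finset.mem_univ x)
  obtain ⟨y0, hy0mem, hy0⟩ := Finset.exists_mem_eq_sup' hne M
  have hMy0 : ∀ y ∈ Finset.univ.filter (fun y => 0 < pY y * k y z), M y ≤ M y0 := by
    intro y hy
    rw [← hy0]
    exact Finset.le_sup' M hy
  have hMnn : 0 ≤ M y0 := by
    have := Finset.le_sup' (fun x => (pXY x y0 / pY y0) / pX x)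
      (Finset.mem_univ (Classical.arbitrary X))
    refine le_trans ?_ this
    exact div_nonneg (div_nonneg (h1 _ _) (hpYnn _)) (hpXpos _).le
  -- key termwise bound
  have hkey : ∀ x y, pXY x y * k y z ≤ M y0 * pX x * (pY y * k y z) := by
    intro x y
    by_cases hy : 0 < pY y * k y z
    · have hyf : y ∈ Finset.univ.filter (fun y => 0 < pY y * k y z) := by
        simp [hy]
      have hpYpos : 0 < pY y := by
        rcases lt_or_ge 0 (pY y) with h | h
        · exact h
        · exfalso; nlinarith [hk y z, hpYnn y]
      have hkpos : 0 < k y z := by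
        rcases lt_or_ge 0 (k y z) with h | h
        · exact h
        · exfalso; nlinarith [hpYnn y]
      have h2 : (pXY x y / pY y) / pX x ≤ M y := by
        rw [hM]; exact Finset.le_sup' (fun x => (pXY x y / pY y) / pX x) (Finset.mem_univ x)
      have h3 : (pXY x y / pY y) / pX x ≤ M y0 := h2.trans (hMy0 y hyf)
      have h4 : pXY x y ≤ M y0 * pX x * pY y := by
        rw [div_div, div_le_iff₀ (mul_pos hpYpos (hpXpos x))] at h3
        nlinarith
      nlinarith
    · have hy0' : pY y * k y z = 0 :=
        le_antisymm (le_of_not_gt hy) (mul_nonneg (hpYnn y) (hk y z))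
      have : pXY x y * k y z = 0 := by
        rcases mul_eq_zero.mp hy0' with h | h
        · have : pXY x y = 0 := le_antisymm (h ▸ hXY_le_pY x y) (h1 x y)
          rw [this, zero_mul]
        · rw [h, mul_zero]
      rw [this, hy0', mul_zero]
  -- L ≤ M y0
  have hLM : L ≤ M y0 := by
    rw [hL]
    apply Finset.sup'_le
    intro x _
    have hsum : ∑ y, pXY x y * k y z ≤ M y0 * pX x * pZ := by
      rw [hpZ, Finset.mul_sum]
      exact Finset.sum_le_sum fun y _ => hkey x y
    rw [div_div, div_le_iff₀ (mul_pos hpZpos (hpXpos x))]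
    nlinarith [hpXpos x]
  -- 0 < L
  have hLpos : 0 < L := by
    have hsum : ∑ x, ∑ y, pXY x y * k y z = pZ := by
      rw [hpZ, Finset.sum_comm]
      congr 1; ext y
      rw [hpY, Finset.sum_mul]
    obtain ⟨x0, hx0⟩ : ∃ x, 0 < ∑ y, pXY x y * k y z := by
      by_contra h
      push_neg at h
      have : ∑ x, ∑ y, pXY x y * k y z = 0 := by
        apply le_antisymm (Finset.sum_nonpos fun x _ => h x)
        exact Finset.sum_nonneg fun x _ =>
          Finset.sum_nonneg fun y _ => mul_nonneg (h1 x y) (hk y z)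
      rw [hsum] at this; linarith
    have h0 : 0 < ((∑ y, pXY x0 y * k y z) / pZ) / pX x0 :=
      div_pos (div_pos hx0 hpZpos) (hpXpos x0)
    refine lt_of_lt_of_le h0 ?_
    rw [hL]
    exact Finset.le_sup' (fun x => ((∑ y, pXY x y * k y z) / pZ) / pX x) (Finset.mem_univ x0)
  calc Real.log L ≤ Real.log (M y0) := Real.log_le_log hLpos hLM
    _ ≤ _ := Finset.le_sup' (fun y => Real.log (M y)) hy0mem
end
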